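/- Let d, d_x, d_y ∈ ℕ, let Θ ⊂ ℝ^d be a nonempty compact set, and let A : Θ → ℝ^{d_y×d_x} and B : Θ → ℝ^{d_y×d_y} be continuous mappings such that, for every θ ∈ Θ, B(θ) is symmetric positive definite and A(θ)ᵀA(θ) is positive definite (i.e. A(θ) has full column rank). Then there exist constants C₁, C₂ ∈ (0, ∞) such that for all θ ∈ Θ, x ∈ ℝ^{d_x} and y ∈ ℝ^{d_y}: φ_{d_y}(y; A(θ)x, B(θ)) ≤ C₁ · e^{C₁‖y‖²} · exp( −(‖x‖ − C₂‖y‖)² / C₁ ). -/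

import Mathlib

open Matrix

/-- The Euclidean norm on `ℝ^n`. -/
noncomputable def euclNorm {n : ℕ} (x : Fin n → ℝ) : ℝ := Real.sqrt (∑ i, (x i) ^ 2)

/-- The density of the `n`-dimensional Gaussian distribution with mean `m` and
(symmetric positive definite) covariance matrix `V`, with respect to Lebesgue measure. -/
noncomputable def gaussDensity {n : ℕ} (m : Fin n → ℝ) (V : Matrix (Fin n) (Fin n) ℝ)
    (x : Fin n → ℝ) : ℝ :=
  ((2 * Real.pi) ^ n * V.det) ^ (-(1 : ℝ) / 2) *
    Real.exp (-((x - m) ⬝ᵥ (V⁻¹ *ᵥ (x - m))) / 2)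

lemma euclNorm_nonneg {n : ℕ} (x : Fin n → ℝ) : 0 ≤ euclNorm x := Real.sqrt_nonneg _

lemma euclNorm_sq {n : ℕ} (x : Fin n → ℝ) : euclNorm x ^ 2 = ∑ i, (x i) ^ 2 :=
  Real.sq_sqrt (Finset.sum_nonneg fun i _ => sq_nonneg _)

lemma euclNorm_eq_norm {n : ℕ} (x : Fin n → ℝ) :
    euclNorm x = ‖(WithLp.equiv 2 (Fin n → ℝ)).symm x‖ := by
  rw [EuclideanSpace.norm_eq]
  simp [euclNorm, Real.norm_eq_abs, sq_abs]

/-- reverse triangle inequality for `euclNorm` -/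
lemma abs_euclNorm_sub_le {n : ℕ} (a b : Fin n → ℝ) :
    |euclNorm a - euclNorm b| ≤ euclNorm (b - a) := by
  rw [euclNorm_eq_norm, euclNorm_eq_norm, euclNorm_eq_norm]
  have h : (WithLp.equiv 2 (Fin n → ℝ)).symm (b - a)
      = (WithLp.equiv 2 (Fin n → ℝ)).symm b - (WithLp.equiv 2 (Fin n → ℝ)).symm a := rfl
  rw [h, norm_sub_rev]
  exact abs_norm_sub_norm_le _ _

/-- Uniform coercivity of a continuous family of positive definite quadratic forms over
a compact set. -/
lemma coercive {n d : ℕ} {Θ : Set (Fin d → ℝ)} (hne : Θ.Nonempty) (hcp : IsCompact Θ)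
    (M : (Fin d → ℝ) → Matrix (Fin n) (Fin n) ℝ)
    (hMc : ContinuousOn M Θ)
    (hMpd : ∀ θ ∈ Θ, ∀ z : Fin n → ℝ, z ≠ 0 → 0 < z ⬝ᵥ (M θ *ᵥ z)) :
    ∃ lam : ℝ, 0 < lam ∧ ∀ θ ∈ Θ, ∀ z : Fin n → ℝ,
      lam * (∑ i, (z i) ^ 2) ≤ z ⬝ᵥ (M θ *ᵥ z) := by
  classical
  set K : Set (Fin n → ℝ) := {z | ∑ i, (z i) ^ 2 = 1} with hKdef
  -- normalization: every nonzero vector scales into K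
  have hsumpos : ∀ z : Fin n → ℝ, z ≠ 0 → 0 < ∑ i, (z i) ^ 2 := by
    intro z hz
    rcases Function.ne_iff.1 hz with ⟨i, hi⟩
    have hi' : z i ≠ 0 := by simpa using hi
    have : 0 < (z i) ^ 2 := by positivity
    exact lt_of_lt_of_le this (Finset.single_le_sum (fun j _ => sq_nonneg (z j))
      (Finset.mem_univ i))
  have hnorm : ∀ z : Fin n → ℝ, z ≠ 0 →
      ((Real.sqrt (∑ i, (z i) ^ 2))⁻¹ • z) ∈ K := by
    intro z hz
    have hs := hsumpos z hz
    have hsq : Real.sqrt (∑ i, (z i) ^ 2) ^ 2 = ∑ i, (z i) ^ 2 := Real.sq_sqrt hs.le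
    have hspos : 0 < Real.sqrt (∑ i, (z i) ^ 2) := Real.sqrt_pos.2 hs
    simp only [hKdef, Set.mem_setOf_eq, Pi.smul_apply, smul_eq_mul, mul_pow,
      ← Finset.mul_sum]
    rw [inv_pow, hsq]
    field_simp
  have hscale : ∀ (θ : Fin d → ℝ) (z : Fin n → ℝ) (c : ℝ),
      (c • z) ⬝ᵥ (M θ *ᵥ (c • z)) = c ^ 2 * (z ⬝ᵥ (M θ *ᵥ z)) := by
    intro θ z c
    rw [Matrix.mulVec_smul, smul_dotProduct, dotProduct_smul,
      smul_eq_mul, smul_eq_mul]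
    ring
  by_cases hKne : K.Nonempty
  · -- K is compact
    have hKcl : IsClosed K := by
      have : Continuous fun z : Fin n → ℝ => ∑ i, (z i) ^ 2 :=
        continuous_finset_sum _ fun i _ => (continuous_apply i).pow 2
      exact isClosed_eq this continuous_const
    have hKbd : Bornology.IsBounded K := by
      apply (Metric.isBounded_closedBall (x := (0 : Fin n → ℝ)) (r := 1)).subset
      intro z hz
      simp only [Metric.mem_closedBall, dist_zero_right]
      refine pi_norm_le_iff_of_nonneg zero_le_one |>.2 fun i => ?_
      rw [Real.norm_eq_abs, ← Real.sqrt_one, ← Real.sqrt_sq_eq_abs]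
      apply Real.sqrt_le_sqrt
      rw [← hz]
      exact Finset.single_le_sum (fun j _ => sq_nonneg (z j)) (Finset.mem_univ i)
    have hKcp : IsCompact K := Metric.isCompact_of_isClosed_isBounded hKcl hKbd
    -- the quadratic form as a function on Θ ×ˢ K
    set F : ((Fin d → ℝ) × (Fin n → ℝ)) → ℝ := fun p => p.2 ⬝ᵥ (M p.1 *ᵥ p.2) with hFdef
    have hFc : ContinuousOn F (Θ ×ˢ K) := by
      have hM1 : ContinuousOn (fun p : (Fin d → ℝ) × (Fin n → ℝ) => M p.1) (Θ ×ˢ K) :=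
        hMc.comp continuousOn_fst (fun p hp => hp.1)
      have hent : ∀ i j, ContinuousOn
          (fun p : (Fin d → ℝ) × (Fin n → ℝ) => M p.1 i j) (Θ ×ˢ K) := by
        intro i j
        have hg : Continuous fun m : Matrix (Fin n) (Fin n) ℝ => m i j :=
          (continuous_apply j).comp (continuous_apply i)
        exact hg.comp_continuousOn hM1
      have hz : ∀ i, ContinuousOn
          (fun p : (Fin d → ℝ) × (Fin n → ℝ) => p.2 i) (Θ ×ˢ K) :=
        fun i => ((continuous_apply i).comp continuous_snd).continuousOn
      have : ContinuousOn (fun p : (Fin d → ℝ) × (Fin n → ℝ) =>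
          ∑ i, p.2 i * ∑ j, M p.1 i j * p.2 j) (Θ ×ˢ K) := by
        apply continuousOn_finset_sum
        intro i _
        exact (hz i).mul (continuousOn_finset_sum _ fun j _ => (hent i j).mul (hz j))
      have hFeq : ∀ p : (Fin d → ℝ) × (Fin n → ℝ),
          F p = ∑ i, p.2 i * ∑ j, M p.1 i j * p.2 j := by
        intro p
        simp [hFdef, dotProduct, Matrix.mulVec]
      exact this.congr fun p _ => hFeq p
    obtain ⟨p₀, hp₀, hmin⟩ := (hcp.prod hKcp).exists_isMinOn (hne.prod hKne) hFc
    have hz₀ : p₀.2 ≠ 0 := by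
      intro h
      have := hp₀.2
      simp only [hKdef, Set.mem_setOf_eq, h] at this
      simp at this
    have hlampos : 0 < F p₀ := hMpd p₀.1 hp₀.1 p₀.2 hz₀
    refine ⟨F p₀, hlampos, fun θ hθ z => ?_⟩
    by_cases hz : z = 0
    · simp [hz]
    · have hs := hsumpos z hz
      set s := Real.sqrt (∑ i, (z i) ^ 2) with hsdef
      have hspos : 0 < s := Real.sqrt_pos.2 hs
      have hsq : s ^ 2 = ∑ i, (z i) ^ 2 := Real.sq_sqrt hs.le
      have hw : (s⁻¹ • z) ∈ K := hnorm z hz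
      have hle : F p₀ ≤ F (θ, s⁻¹ • z) := hmin (Set.mk_mem_prod hθ hw)
      have heq : F (θ, s⁻¹ • z) = (s⁻¹) ^ 2 * (z ⬝ᵥ (M θ *ᵥ z)) := hscale θ z s⁻¹
      rw [heq] at hle
      have : F p₀ * s ^ 2 ≤ (s⁻¹) ^ 2 * (z ⬝ᵥ (M θ *ᵥ z)) * s ^ 2 :=
        mul_le_mul_of_nonneg_right hle (sq_nonneg s)
      calc F p₀ * ∑ i, (z i) ^ 2 = F p₀ * s ^ 2 := by rw [hsq]
        _ ≤ (s⁻¹) ^ 2 * (z ⬝ᵥ (M θ *ᵥ z)) * s ^ 2 := this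
        _ = z ⬝ᵥ (M θ *ᵥ z) := by
            have hs2 : s ^ 2 ≠ 0 := pow_ne_zero _ hspos.ne'
            generalize z ⬝ᵥ (M θ *ᵥ z) = X
            field_simp
  · -- K empty: every vector is zero
    refine ⟨1, one_pos, fun θ hθ z => ?_⟩
    have hz : z = 0 := by
      by_contra hz
      exact hKne ⟨_, hnorm z hz⟩
    simp [hz]

theorem stmt11 (d dx dy : ℕ) (Θ : Set (Fin d → ℝ)) (hne : Θ.Nonempty) (hcp : IsCompact Θ)
    (A : (Fin d → ℝ) → Matrix (Fin dy) (Fin dx) ℝ)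
    (B : (Fin d → ℝ) → Matrix (Fin dy) (Fin dy) ℝ)
    (hA : ∀ i j, ContinuousOn (fun θ => A θ i j) Θ)
    (hB : ∀ i j, ContinuousOn (fun θ => B θ i j) Θ)
    (hBpd : ∀ θ ∈ Θ, (B θ).PosDef)
    (hApd : ∀ θ ∈ Θ, ((A θ)ᵀ * A θ).PosDef) :
    ∃ C₁ : ℝ, 0 < C₁ ∧ ∃ C₂ : ℝ, 0 < C₂ ∧
      ∀ θ ∈ Θ, ∀ (x : Fin dx → ℝ) (y : Fin dy → ℝ),
        gaussDensity (A θ *ᵥ x) (B θ) y ≤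
          C₁ * Real.exp (C₁ * euclNorm y ^ 2) *
            Real.exp (-(euclNorm x - C₂ * euclNorm y) ^ 2 / C₁) := by
  classical
  -- continuity of the matrix-valued maps
  have hBm : ContinuousOn B Θ :=
    continuousOn_pi.2 fun i => continuousOn_pi.2 fun j => hB i j
  have hAm : ContinuousOn A Θ :=
    continuousOn_pi.2 fun i => continuousOn_pi.2 fun j => hA i j
  have hdetc : ContinuousOn (fun θ => (B θ).det) Θ :=
    (Continuous.matrix_det continuous_id).comp_continuousOn hBm
  have hadjc : ContinuousOn (fun θ => (B θ).adjugate) Θ :=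
    (Continuous.matrix_adjugate continuous_id).comp_continuousOn hBm
  have hdet_ne : ∀ θ ∈ Θ, (B θ).det ≠ 0 := fun θ hθ => ((hBpd θ hθ).det_pos).ne'
  have hBinvc : ContinuousOn (fun θ => (B θ)⁻¹) Θ := by
    have heq : (fun θ => (B θ)⁻¹) = fun θ => ((B θ).det)⁻¹ • (B θ).adjugate := by
      funext θ
      rw [Matrix.inv_def, Ring.inverse_eq_inv]
    rw [heq]
    exact (hdetc.inv₀ hdet_ne).smul hadjc
  have hAtAc : ContinuousOn (fun θ => (A θ)ᵀ * A θ) Θ := by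
    have hg : Continuous fun m : Matrix (Fin dy) (Fin dx) ℝ => mᵀ * m :=
      (Continuous.matrix_transpose continuous_id).matrix_mul continuous_id
    exact hg.comp_continuousOn hAm
  -- uniform coercivity of B⁻¹
  obtain ⟨lam, hlam, hlamB⟩ := coercive hne hcp (fun θ => (B θ)⁻¹) hBinvc
    (fun θ hθ z hz => by simpa using (Matrix.posDef_iff_dotProduct_mulVec.mp (Matrix.posDef_inv_iff.2 (hBpd θ hθ))).2 hz)
  -- uniform coercivity of AᵀA
  obtain ⟨μ, hμ, hμA⟩ := coercive hne hcp (fun θ => (A θ)ᵀ * A θ) hAtAc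
    (fun θ hθ z hz => by simpa using (Matrix.posDef_iff_dotProduct_mulVec.mp (hApd θ hθ)).2 hz)
  -- uniform lower bound on det B
  obtain ⟨θ₀, hθ₀, hdmin⟩ := hcp.exists_isMinOn hne hdetc
  set δ : ℝ := (B θ₀).det with hδdef
  have hδpos : 0 < δ := (hBpd θ₀ hθ₀).det_pos
  have hδle : ∀ θ ∈ Θ, δ ≤ (B θ).det := fun θ hθ => hdmin hθ
  -- constants
  set c : ℝ := ((2 * Real.pi) ^ dy * δ) ^ (-(1 : ℝ) / 2) with hcdef
  have hbase : 0 < (2 * Real.pi) ^ dy * δ := by positivity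
  have hcpos : 0 < c := Real.rpow_pos_of_pos hbase _
  set C₁ : ℝ := max (max c (lam / 2)) (max (2 / (lam * μ)) 1) with hC₁def
  have hC₁1 : (1 : ℝ) ≤ C₁ := le_max_of_le_right (le_max_right _ _)
  have hC₁pos : 0 < C₁ := lt_of_lt_of_le one_pos hC₁1
  have hcC₁ : c ≤ C₁ := le_max_of_le_left (le_max_left _ _)
  have hlamC₁ : lam / 2 ≤ C₁ := le_max_of_le_left (le_max_right _ _)
  have hinvC₁ : 2 / (lam * μ) ≤ C₁ := le_max_of_le_right (le_max_left _ _)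
  have hsqμ : 0 < Real.sqrt μ := Real.sqrt_pos.2 hμ
  refine ⟨C₁, hC₁pos, (Real.sqrt μ)⁻¹, inv_pos.2 hsqμ, fun θ hθ x y => ?_⟩
  set C₂ : ℝ := (Real.sqrt μ)⁻¹ with hC₂def
  set m : Fin dy → ℝ := A θ *ᵥ x with hmdef
  set z : Fin dy → ℝ := y - m with hzdef
  set q : ℝ := z ⬝ᵥ ((B θ)⁻¹ *ᵥ z) with hqdef
  have hgd : gaussDensity m (B θ) y =
      ((2 * Real.pi) ^ dy * (B θ).det) ^ (-(1 : ℝ) / 2) * Real.exp (-q / 2) := rfl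
  set nx : ℝ := euclNorm x with hnxdef
  set ny : ℝ := euclNorm y with hnydef
  set na : ℝ := euclNorm m with hnadef
  set nz : ℝ := euclNorm z with hnzdef
  set t : ℝ := (nx - C₂ * ny) ^ 2 with htdef
  -- coercivity bounds (using definitional equalities, before clearing values)
  have hq : lam * nz ^ 2 ≤ q := by
    have := hlamB θ hθ z
    rw [← euclNorm_sq z] at this
    exact this
  have hna : Real.sqrt μ * nx ≤ na := by
    have h1 : μ * euclNorm x ^ 2 ≤ euclNorm m ^ 2 := by
      rw [euclNorm_sq m, euclNorm_sq x]
      have h2 : m ⬝ᵥ m = ∑ i, (m i) ^ 2 := by simp [dotProduct, sq]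
      have h3 : (A θ *ᵥ x) ⬝ᵥ (A θ *ᵥ x) = x ⬝ᵥ (((A θ)ᵀ * A θ) *ᵥ x) := by
        rw [← Matrix.mulVec_mulVec, Matrix.dotProduct_mulVec x (A θ)ᵀ,
          Matrix.vecMul_transpose]
      calc μ * ∑ i, (x i) ^ 2 ≤ x ⬝ᵥ (((A θ)ᵀ * A θ) *ᵥ x) := hμA θ hθ x
        _ = m ⬝ᵥ m := by rw [hmdef, ← h3]
        _ = ∑ i, (m i) ^ 2 := h2
    have h4 := Real.sqrt_le_sqrt h1
    rwa [Real.sqrt_mul hμ.le, Real.sqrt_sq (euclNorm_nonneg x),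
      Real.sqrt_sq (euclNorm_nonneg m)] at h4
  have htri : |na - ny| ≤ nz := abs_euclNorm_sub_le m y
  have hnx0 : 0 ≤ nx := euclNorm_nonneg x
  have hny0 : 0 ≤ ny := euclNorm_nonneg y
  have hnz0 : 0 ≤ nz := euclNorm_nonneg z
  -- prefactor bound
  have hpre : ((2 * Real.pi) ^ dy * (B θ).det) ^ (-(1 : ℝ) / 2) ≤ c := by
    apply Real.rpow_le_rpow_of_nonpos hbase
    · exact mul_le_mul_of_nonneg_left (hδle θ hθ) (by positivity)
    · norm_num
  rw [hgd]
  -- from now on, everything is scalar arithmetic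
  clear_value m z q nx ny na nz t C₂
  have htri1 : na - ny ≤ nz := (abs_le.1 htri).2
  have htri2 : -nz ≤ na - ny := (abs_le.1 htri).1
  have hsq1 : (na - ny) ^ 2 ≤ nz ^ 2 := sq_le_sq' htri2 htri1
  -- key inequality: (√μ nx - ny)² - ny² ≤ (na - ny)²
  have hkey : (Real.sqrt μ * nx - ny) ^ 2 - ny ^ 2 ≤ (na - ny) ^ 2 := by
    rcases le_or_gt ny (Real.sqrt μ * nx) with h | h
    · have h0 : 0 ≤ Real.sqrt μ * nx - ny := by linarith
      have h1 : Real.sqrt μ * nx - ny ≤ na - ny := by linarith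
      have := pow_le_pow_left₀ h0 h1 2
      linarith [sq_nonneg ny]
    · have h0 : 0 ≤ Real.sqrt μ * nx := by positivity
      have h2 : (Real.sqrt μ * nx - ny) ^ 2 ≤ ny ^ 2 :=
        sq_le_sq' (by linarith) (by linarith)
      linarith [sq_nonneg (na - ny)]
  -- relate (√μ nx - ny)² to t
  have hμt : (Real.sqrt μ * nx - ny) ^ 2 = μ * t := by
    have h1 : Real.sqrt μ * nx - ny = Real.sqrt μ * (nx - C₂ * ny) := by
      rw [hC₂def]
      field_simp
    rw [h1, mul_pow, Real.sq_sqrt hμ.le, htdef]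
  -- assemble: q ≥ lam*μ*t - lam*ny²
  have hqlow : lam * μ * t - lam * ny ^ 2 ≤ q := by
    have h1 : lam * ((Real.sqrt μ * nx - ny) ^ 2 - ny ^ 2) ≤ lam * nz ^ 2 :=
      mul_le_mul_of_nonneg_left (le_trans hkey hsq1) hlam.le
    rw [hμt] at h1
    have h2 : lam * (μ * t - ny ^ 2) = lam * μ * t - lam * ny ^ 2 := by ring
    nlinarith
  have hexp1 : Real.exp (-q / 2) ≤
      Real.exp (lam / 2 * ny ^ 2) * Real.exp (-(lam * μ / 2) * t) := by
    rw [← Real.exp_add, Real.exp_le_exp]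
    linarith
  have hfac2 : Real.exp (lam / 2 * ny ^ 2) ≤ Real.exp (C₁ * ny ^ 2) := by
    rw [Real.exp_le_exp]
    exact mul_le_mul_of_nonneg_right hlamC₁ (sq_nonneg _)
  have hfac3 : Real.exp (-(lam * μ / 2) * t) ≤ Real.exp (-t / C₁) := by
    rw [Real.exp_le_exp]
    have hlamμ : 0 < lam * μ := mul_pos hlam hμ
    have h2pos : 0 < 2 / (lam * μ) := by positivity
    have h1 : 1 / C₁ ≤ lam * μ / 2 := by
      have := one_div_le_one_div_of_le h2pos hinvC₁
      rwa [one_div_div] at this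
    have ht0 : 0 ≤ t := htdef ▸ sq_nonneg _
    have h2 : t * (1 / C₁) ≤ t * (lam * μ / 2) := mul_le_mul_of_nonneg_left h1 ht0
    have e1 : t / C₁ = t * (1 / C₁) := by ring
    have e2 : -(lam * μ / 2) * t = -(t * (lam * μ / 2)) := by ring
    rw [neg_div]
    linarith
  calc ((2 * Real.pi) ^ dy * (B θ).det) ^ (-(1 : ℝ) / 2) * Real.exp (-q / 2)
      ≤ c * (Real.exp (lam / 2 * ny ^ 2) * Real.exp (-(lam * μ / 2) * t)) :=
        mul_le_mul hpre hexp1 (Real.exp_pos _).le hcpos.le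
    _ = c * Real.exp (lam / 2 * ny ^ 2) * Real.exp (-(lam * μ / 2) * t) := by ring
    _ ≤ C₁ * Real.exp (C₁ * ny ^ 2) * Real.exp (-t / C₁) :=
        mul_le_mul (mul_le_mul hcC₁ hfac2 (Real.exp_pos _).le hC₁pos.le)
          hfac3 (Real.exp_pos _).le (by positivity)
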